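/- Let X and Y be Polish spaces and c a positive cost function on X × Y (i.e., additionally c(z₁,z₂) > 0 whenever z₁ ≠ z₂). Then for any probability measure γ on X × Y, the transport dependency satisfies τ_c(γ) = 0 if and only if γ = μ ⊗ ν is a product measure, i.e., if and only if γ equals the product of its two marginals. -/

import Mathlib

open MeasureTheory ENNReal Filter Topology

/-- The optimal transport cost between two measures `μ` and `ν` on a space `Z`
with base cost `c`: the infimum of `∫ c dπ` over all couplings `π` of `μ` and `ν`. -/
noncomputable def otCost {Z : Type*} [MeasurableSpace Z]
    (c : Z → Z → ℝ≥0∞) (μ ν : Measure Z) : ℝ≥0∞ :=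
  ⨅ (π : Measure (Z × Z)) (_ : π.map Prod.fst = μ ∧ π.map Prod.snd = ν),
    ∫⁻ p, c p.1 p.2 ∂π

/-- The transport dependency of a measure `γ` on `X × Y`: the optimal transport cost
between `γ` and the product of its marginals. -/
noncomputable def tdep {X Y : Type*} [MeasurableSpace X] [MeasurableSpace Y]
    (c : X × Y → X × Y → ℝ≥0∞) (γ : Measure (X × Y)) : ℝ≥0∞ :=
  otCost c γ ((γ.map Prod.fst).prod (γ.map Prod.snd))

open Set Metric in
private 
lemma lsc_pos_bound {α : Type*} [TopologicalSpace α] {f : α → ℝ≥0∞}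
    (hf : LowerSemicontinuous f) {S : Set α} (hS : IsCompact S)
    (hpos : ∀ z ∈ S, 0 < f z) :
    ∃ m : ℝ≥0∞, 0 < m ∧ m ≠ ∞ ∧ ∀ z ∈ S, m ≤ f z := by
  set a : α → ℝ≥0∞ := fun z => min 1 (f z) / 2 with ha
  have hmin_pos : ∀ z ∈ S, 0 < min 1 (f z) := fun z hz => lt_min one_pos (hpos z hz)
  have hmin_top : ∀ z : α, min 1 (f z) ≠ ∞ := fun z =>
    ((min_le_left _ _).trans_lt one_lt_top).ne
  have ha_pos : ∀ z ∈ S, 0 < a z := fun z hz =>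
    ENNReal.div_pos (hmin_pos z hz).ne' (by norm_num)
  have ha_lt : ∀ z ∈ S, a z < f z := fun z hz =>
    (ENNReal.half_lt_self (hmin_pos z hz).ne' (hmin_top z)).trans_le (min_le_right _ _)
  obtain ⟨t, htS, htfin, hcov⟩ := hS.elim_finite_subcover_image
    (fun z (_ : z ∈ S) => hf.isOpen_preimage (a z))
    (fun z hz => mem_biUnion hz (ha_lt z hz))
  refine ⟨min (htfin.toFinset.inf a) 1, ?_, ?_, ?_⟩
  · refine lt_min ?_ one_pos
    rw [Finset.lt_inf_iff (by simp : (0:ℝ≥0∞) < ⊤)]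
    · intro b hb
      exact ha_pos b (htS (htfin.mem_toFinset.mp hb))
  · exact ((min_le_right _ _).trans_lt one_lt_top).ne
  · intro z hz
    obtain ⟨w, hw, hzw⟩ := mem_iUnion₂.mp (hcov hz)
    exact le_trans (min_le_left _ _)
      ((Finset.inf_le (htfin.mem_toFinset.mpr hw)).trans hzw.le)


open Set Metric in
private 
lemma exists_compact_compl_le {Z : Type*} [MetricSpace Z] [CompleteSpace Z]
    [SecondCountableTopology Z] [MeasurableSpace Z] [BorelSpace Z]
    (μ : Measure Z) [IsProbabilityMeasure μ] {ε : ℝ≥0∞} (hε : 0 < ε) :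
    ∃ K : Set Z, IsCompact K ∧ μ Kᶜ ≤ ε := by
  rcases isEmpty_or_nonempty Z with hZ | hZ
  · refine absurd (measure_univ (μ := μ)) ?_
    rw [Set.univ_eq_empty_iff.mpr hZ, measure_empty]
    simp
  obtain ⟨u, hu⟩ := TopologicalSpace.exists_dense_seq Z
  set s : ℕ → ℕ → Set Z := fun n N => ⋃ i ∈ Finset.range N, closedBall (u i) (1 / (n + 1)) with hs
  have hs_closed : ∀ n N, IsClosed (s n N) := fun n N =>
    (Finset.range N).finite_toSet.isClosed_biUnion fun i _ => isClosed_closedBall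
  have hs_mono : ∀ n, Antitone fun N => (s n N)ᶜ := by
    intro n N M hNM
    apply compl_subset_compl.mpr
    exact iUnion₂_subset fun i hi => subset_iUnion₂ (s := fun i _ => closedBall (u i) _) i
      (Finset.mem_range.mpr ((Finset.mem_range.mp hi).trans_le hNM))
  have hs_iUnion : ∀ n, (⋃ N, s n N) = univ := by
    intro n
    refine eq_univ_of_forall fun x => ?_
    obtain ⟨i, hi⟩ := denseRange_iff.mp hu x (1 / (n + 1)) (by positivity)
    exact mem_iUnion.mpr ⟨i + 1, mem_biUnion (Finset.self_mem_range_succ i)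
      (mem_closedBall.mpr hi.le)⟩
  set δ : ℕ → ℝ≥0∞ := fun n => ε * 2⁻¹ ^ (n + 1) with hδ
  have hδ_pos : ∀ n, 0 < δ n := fun n =>
    ENNReal.mul_pos hε.ne' (pow_ne_zero _ (by simp))
  have htend : ∀ n, Tendsto (fun N => μ ((s n N)ᶜ)) atTop (𝓝 0) := by
    intro n
    have h := tendsto_measure_iInter_atTop
      (μ := μ) (s := fun N => (s n N)ᶜ)
      (fun N => ((hs_closed n N).measurableSet.compl).nullMeasurableSet)
      (hs_mono n) ⟨0, measure_ne_top μ _⟩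
    rwa [← compl_iUnion, hs_iUnion n, compl_univ, measure_empty] at h
  have hex : ∀ n, ∃ N, μ ((s n N)ᶜ) ≤ δ n := fun n =>
    (((htend n).eventually_lt_const (hδ_pos n)).exists).imp fun N h => h.le
  choose N hN using hex
  refine ⟨⋂ n, s n (N n), ?_, ?_⟩
  · refine TotallyBounded.isCompact_of_isClosed (Metric.totallyBounded_iff.mpr ?_)
      (isClosed_iInter fun n => hs_closed n _)
    intro r hr
    obtain ⟨n, hn⟩ := exists_nat_one_div_lt hr
    refine ⟨u '' ↑(Finset.range (N n)), ((Finset.range (N n)).finite_toSet.image u), ?_⟩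
    refine (iInter_subset _ n).trans (iUnion₂_subset fun i hi => ?_)
    refine (closedBall_subset_ball hn).trans ?_
    exact subset_iUnion₂_of_subset (u i) (mem_image_of_mem u (Finset.mem_coe.mpr hi)) subset_rfl
  · rw [compl_iInter]
    refine (measure_iUnion_le _).trans ?_
    refine (ENNReal.tsum_le_tsum hN).trans ?_
    rw [hδ, ENNReal.tsum_mul_left, ENNReal.tsum_geometric_add_one, ENNReal.one_sub_inv_two,
      inv_inv, ENNReal.inv_mul_cancel two_ne_zero ofNat_ne_top, mul_one]


open Set Metric in
private lemma measure_le_of_otCost_zero {Z : Type*} [MetricSpace Z] [CompleteSpace Z]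
    [SecondCountableTopology Z] [MeasurableSpace Z] [BorelSpace Z]
    (c : Z → Z → ℝ≥0∞) (hlsc : LowerSemicontinuous (Function.uncurry c))
    (hpos : ∀ a b, a ≠ b → 0 < c a b)
    (μ ν : Measure Z) [IsProbabilityMeasure μ] [IsProbabilityMeasure ν]
    (h : otCost c μ ν = 0) {F : Set Z} (hF : IsClosed F) : μ F ≤ ν F := by
  have hkey : ∀ r : ℝ, 0 < r → ∀ ε : ℝ≥0∞, 0 < ε →
      μ F ≤ ν (thickening r F) + (ε + (ε + ε)) := by
    intro r hr ε hε
    obtain ⟨K, hK, hKμ⟩ := exists_compact_compl_le μ hε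
    obtain ⟨K', hK', hKν⟩ := exists_compact_compl_le ν hε
    set L := K ∪ K' with hLdef
    have hL : IsCompact L := hK.union hK'
    have hμL : μ Lᶜ ≤ ε :=
      (measure_mono (compl_subset_compl.mpr subset_union_left)).trans hKμ
    have hνL : ν Lᶜ ≤ ε :=
      (measure_mono (compl_subset_compl.mpr subset_union_right)).trans hKν
    set S := (L ×ˢ L) ∩ {p : Z × Z | r ≤ dist p.1 p.2} with hSdef
    have hSc : IsCompact S := (hL.prod hL).inter_right
      (isClosed_le continuous_const (continuous_fst.dist continuous_snd))
    have hSmeas : MeasurableSet S := hSc.isClosed.measurableSet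
    have hSpos : ∀ p ∈ S, 0 < Function.uncurry c p := fun p hp =>
      hpos _ _ (dist_pos.mp (hr.trans_le hp.2))
    obtain ⟨m, hm0, hmtop, hmS⟩ := lsc_pos_bound hlsc hSc hSpos
    have hb : (0 : ℝ≥0∞) < ε * m := ENNReal.mul_pos hε.ne' hm0.ne'
    have hlt : otCost c μ ν < ε * m := h ▸ hb
    rw [otCost] at hlt
    obtain ⟨π, hπ⟩ := iInf_lt_iff.mp hlt
    obtain ⟨⟨hπ1, hπ2⟩, hπint⟩ := iInf_lt_iff.mp hπ
    have h1 : m * π S ≤ ∫⁻ p, c p.1 p.2 ∂π := by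
      rw [← lintegral_indicator_const hSmeas m]
      exact lintegral_mono (Set.indicator_le fun p hp => hmS p hp)
    have hπS : π S ≤ ε := by
      refine le_of_lt ((ENNReal.mul_lt_mul_iff_right hm0.ne' hmtop).mp ?_)
      calc m * π S ≤ ∫⁻ p, c p.1 p.2 ∂π := h1
        _ < ε * m := hπint
        _ = m * ε := mul_comm _ _
    have hsub : Prod.fst ⁻¹' F ⊆
        (Prod.snd ⁻¹' thickening r F) ∪ (S ∪ (L ×ˢ L)ᶜ) := by
      intro p hp
      by_cases hpL : p ∈ L ×ˢ L
      · by_cases hd : r ≤ dist p.1 p.2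
        · exact Or.inr (Or.inl ⟨hpL, hd⟩)
        · refine Or.inl (Metric.mem_thickening_iff.mpr ⟨p.1, hp, ?_⟩)
          rw [dist_comm]
          exact lt_of_not_ge hd
      · exact Or.inr (Or.inr hpL)
    have hcompl : π ((L ×ˢ L)ᶜ) ≤ ε + ε := by
      have hsub2 : (L ×ˢ L)ᶜ ⊆ (Prod.fst ⁻¹' Lᶜ) ∪ (Prod.snd ⁻¹' Lᶜ) := by
        intro p hp
        rw [mem_compl_iff, mem_prod, not_and_or] at hp
        exact hp
      calc π ((L ×ˢ L)ᶜ) ≤ π (Prod.fst ⁻¹' Lᶜ) + π (Prod.snd ⁻¹' Lᶜ) :=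
            (measure_mono hsub2).trans (measure_union_le _ _)
        _ = μ Lᶜ + ν Lᶜ := by
            rw [← hπ1, ← hπ2, Measure.map_apply measurable_fst
              hL.isClosed.measurableSet.compl,
              Measure.map_apply measurable_snd hL.isClosed.measurableSet.compl]
        _ ≤ ε + ε := add_le_add hμL hνL
    calc μ F = π (Prod.fst ⁻¹' F) := by
          rw [← hπ1, Measure.map_apply measurable_fst hF.measurableSet]
      _ ≤ π ((Prod.snd ⁻¹' thickening r F) ∪ (S ∪ (L ×ˢ L)ᶜ)) := measure_mono hsub
      _ ≤ π (Prod.snd ⁻¹' thickening r F) + π (S ∪ (L ×ˢ L)ᶜ) := measure_union_le _ _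
      _ ≤ π (Prod.snd ⁻¹' thickening r F) + (π S + π ((L ×ˢ L)ᶜ)) :=
          add_le_add le_rfl (measure_union_le _ _)
      _ ≤ ν (thickening r F) + (ε + (ε + ε)) := by
          rw [← hπ2, Measure.map_apply measurable_snd isOpen_thickening.measurableSet]
          exact add_le_add le_rfl (add_le_add hπS hcompl)
  have hthick : ∀ r : ℝ, 0 < r → μ F ≤ ν (thickening r F) := by
    intro r hr
    refine ENNReal.le_of_forall_pos_le_add fun ε₀ hε₀ _ => ?_
    have hpos3 : (0 : ℝ≥0∞) < (ε₀ : ℝ≥0∞) / 3 :=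
      ENNReal.div_pos (by exact_mod_cast hε₀.ne') (by norm_num)
    have h3 := hkey r hr ((ε₀ : ℝ≥0∞) / 3) hpos3
    have h4 : (ε₀ : ℝ≥0∞) / 3 + ((ε₀ : ℝ≥0∞) / 3 + (ε₀ : ℝ≥0∞) / 3) = ε₀ := by
      rw [show ∀ x : ℝ≥0∞, x + (x + x) = x * 3 from fun x => by ring]
      exact ENNReal.div_mul_cancel (by norm_num) (by norm_num)
    rwa [h4] at h3
  have htend := tendsto_measure_thickening_of_isClosed
    (μ := ν) ⟨1, one_pos, measure_ne_top ν _⟩ hF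
  exact ge_of_tendsto htend (eventually_nhdsWithin_of_forall fun r hr => hthick r hr)

open Set Metric in
private lemma measure_eq_of_otCost_zero {Z : Type*} [MetricSpace Z] [CompleteSpace Z]
    [SecondCountableTopology Z] [MeasurableSpace Z] [BorelSpace Z]
    (c : Z → Z → ℝ≥0∞) (hlsc : LowerSemicontinuous (Function.uncurry c))
    (hsymm : ∀ z₁ z₂, c z₁ z₂ = c z₂ z₁)
    (hpos : ∀ a b, a ≠ b → 0 < c a b)
    (μ ν : Measure Z) [IsProbabilityMeasure μ] [IsProbabilityMeasure ν]
    (h : otCost c μ ν = 0) : μ = ν := by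
  have hmeasc : Measurable (fun p : Z × Z => c p.1 p.2) := hlsc.measurable
  have hswap : otCost c ν μ = 0 := by
    refine le_antisymm ?_ zero_le
    rw [← h, otCost, otCost]
    refine le_iInf₂ fun π hπ => ?_
    have h1 : (π.map Prod.swap).map Prod.fst = ν := by
      rw [Measure.map_map measurable_fst measurable_swap]
      exact hπ.2
    have h2 : (π.map Prod.swap).map Prod.snd = μ := by
      rw [Measure.map_map measurable_snd measurable_swap]
      exact hπ.1
    refine (iInf₂_le (π.map Prod.swap) ⟨h1, h2⟩).trans_eq ?_
    rw [lintegral_map hmeasc measurable_swap]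
    exact lintegral_congr fun p => hsymm _ _
  have hle : ∀ F : Set Z, IsClosed F → μ F ≤ ν F := fun F hF =>
    measure_le_of_otCost_zero c hlsc hpos μ ν h hF
  have hge : ∀ F : Set Z, IsClosed F → ν F ≤ μ F := fun F hF =>
    measure_le_of_otCost_zero c hlsc hpos ν μ hswap hF
  have hgen : (inferInstance : MeasurableSpace Z)
      = .generateFrom {s : Set Z | IsClosed s} := by
    rw [BorelSpace.measurable_eq (α := Z), borel_eq_generateFrom_isClosed]
  exact ext_of_generate_finite _ hgen
    (fun s hs t ht _ => IsClosed.inter hs ht)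
    (fun s hs => le_antisymm (hle s hs) (hge s hs)) (by simp)


/-- For a positive cost function `c` on `X × Y` (Polish spaces),
the transport dependency of a probability measure `γ` vanishes if and only if `γ`
is the product of its marginals. -/
theorem tdep_eq_zero_iff_prod
    {X Y : Type*} [TopologicalSpace X] [PolishSpace X] [MeasurableSpace X] [BorelSpace X]
    [TopologicalSpace Y] [PolishSpace Y] [MeasurableSpace Y] [BorelSpace Y]
    (c : X × Y → X × Y → ℝ≥0∞)
    (hc_lsc : LowerSemicontinuous (Function.uncurry c))
    (hc_symm : ∀ z₁ z₂, c z₁ z₂ = c z₂ z₁)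
    (hc_diag : ∀ z, c z z = 0)
    (hc_pos : ∀ z₁ z₂, z₁ ≠ z₂ → 0 < c z₁ z₂)
    (γ : Measure (X × Y)) [IsProbabilityMeasure γ] :
    tdep c γ = 0 ↔ γ = (γ.map Prod.fst).prod (γ.map Prod.snd) := by
  haveI : IsProbabilityMeasure (γ.map (Prod.fst : X × Y → X)) :=
    Measure.isProbabilityMeasure_map measurable_fst.aemeasurable
  haveI : IsProbabilityMeasure (γ.map (Prod.snd : X × Y → Y)) :=
    Measure.isProbabilityMeasure_map measurable_snd.aemeasurable
  constructor
  · intro h0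
    letI := TopologicalSpace.upgradeIsCompletelyMetrizable (X × Y)
    exact measure_eq_of_otCost_zero c hc_lsc hc_symm hc_pos γ _ h0
  · intro hγ
    refine le_antisymm ?_ zero_le
    have hm : Measurable (fun z : X × Y => (z, z)) := measurable_id.prodMk measurable_id
    set π := γ.map (fun z : X × Y => (z, z)) with hπdef
    have h1 : π.map Prod.fst = γ := by
      rw [hπdef, Measure.map_map measurable_fst hm]
      exact Measure.map_id
    have h2 : π.map Prod.snd = (γ.map Prod.fst).prod (γ.map Prod.snd) := by
      rw [hπdef, Measure.map_map measurable_snd hm]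
      exact Measure.map_id.trans hγ
    have hmeasc : Measurable (fun p : (X × Y) × (X × Y) => c p.1 p.2) := hc_lsc.measurable
    refine (iInf₂_le (α := ℝ≥0∞) π ⟨h1, h2⟩).trans ?_
    rw [hπdef, lintegral_map hmeasc hm]
    simp [hc_diag]
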